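/- Let s ≥ 1 be an integer and set K = 2, M = s+1, N = 3s, L = min(3s, 2(s+1)). Then for every real r with 0 ≤ r ≤ L/2, the supremum over pairs (D_1, D_2) of reals with 0 ≤ D_1 ≤ s+1, 0 ≤ D_2 ≤ s+1, and D_1+D_2 ≤ L, of min( d^{D_1}_{s+1,3s}(r), d^{D_2}_{s+1,3s}(r), d^{D_1+D_2}_{2(s+1),3s}(2r) ), equals d^{FC}_{2,s+1,3s}(r). -/

import Mathlib

/-- The index `l` of the interval of average dimensions per channel use `D`
to which `D` belongs: the smallest `l` with `D ≤ (MN − l(l+1))/(N+M−1−2l)`. -/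
noncomputable def lIdx (M N : ℕ) (D : ℝ) : ℕ :=
  sInf {l : ℕ |
    D ≤ ((M : ℝ) * (N : ℝ) - (l : ℝ) * ((l : ℝ) + 1)) /
        ((N : ℝ) + (M : ℝ) - 1 - 2 * (l : ℝ))}

/-- The upper bound `d^{D}_{M,N}(r)` on the DMT of infinite constellations with
`D` average dimensions per channel use, in a point-to-point channel with `M`
transmit and `N` receive antennas.  It vanishes for `r ≥ D` or `D = 0`, and for
`0 ≤ r < D` it is the straight line `((M−l)(N−l)/(D−l))·(D−r)` where `l = lIdx M N D`
is determined by the interval of `D`. -/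
noncomputable def dIC (M N : ℕ) (D r : ℝ) : ℝ :=
  if D ≤ 0 ∨ D ≤ r then 0
  else
    (((M : ℝ) - (lIdx M N D : ℝ)) * ((N : ℝ) - (lIdx M N D : ℝ)) /
        (D - (lIdx M N D : ℝ))) * (D - r)

/-- The optimal point-to-point DMT `d^{FC}_{M,N}(r)` of finite constellations:
the piecewise linear function through the points `(l, (M−l)(N−l))`. -/
noncomputable def dFC (M N : ℕ) (r : ℝ) : ℝ :=
  ((M : ℝ) - (⌊r⌋ : ℝ)) * ((N : ℝ) - (⌊r⌋ : ℝ))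
    + (r - (⌊r⌋ : ℝ)) *
      (((M : ℝ) - (⌊r⌋ : ℝ) - 1) * ((N : ℝ) - (⌊r⌋ : ℝ) - 1)
        - ((M : ℝ) - (⌊r⌋ : ℝ)) * ((N : ℝ) - (⌊r⌋ : ℝ)))

/-- The optimal symmetric multiple-access DMT `d^{FC}_{K,M,N}(r)` of finite
constellations: it equals `d^{FC}_{M,N}(r)` for `r ≤ min(N/(K+1), M)` and
`d^{FC}_{KM,N}(K·r)` afterwards. -/
noncomputable def dFCmac (K M N : ℕ) (r : ℝ) : ℝ :=
  if r ≤ min ((N : ℝ) / ((K : ℝ) + 1)) (M : ℝ) then dFC M N r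
  else dFC (K * M) N ((K : ℝ) * r)

noncomputable def DD (M N k : ℕ) : ℝ :=
  ((M : ℝ) * (N : ℝ) - (k : ℝ) * ((k : ℝ) + 1)) /
    ((N : ℝ) + (M : ℝ) - 1 - 2 * (k : ℝ))

lemma lIdx_eq (M N : ℕ) (D : ℝ) : lIdx M N D = sInf {l : ℕ | D ≤ DD M N l} := rfl

lemma lIdx_le {M N k : ℕ} {D : ℝ} (h : D ≤ DD M N k) : lIdx M N D ≤ k := by
  rw [lIdx_eq]; exact Nat.sInf_le h

lemma DD_lt_of_lt {M N k : ℕ} {D : ℝ} (h : k < lIdx M N D) : DD M N k < D := by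
  by_contra h'
  push_neg at h'
  exact absurd (lIdx_le h') (by omega)

lemma le_DD_lIdx {M N k : ℕ} {D : ℝ} (h : D ≤ DD M N k) :
    D ≤ DD M N (lIdx M N D) := by
  rw [lIdx_eq]
  exact Nat.sInf_mem (⟨k, h⟩ : Set.Nonempty {l : ℕ | D ≤ DD M N l})

lemma DD_den_pos {M N k : ℕ} (hk : k + 1 ≤ min M N) :
    (0:ℝ) < (N : ℝ) + (M : ℝ) - 1 - 2 * (k : ℝ) := by
  have c1 : (k:ℝ) + 1 ≤ (M:ℝ) := by exact_mod_cast le_trans hk (min_le_left _ _)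
  have c2 : (k:ℝ) + 1 ≤ (N:ℝ) := by exact_mod_cast le_trans hk (min_le_right _ _)
  linarith

lemma DD_ge {M N k : ℕ} (hk : k + 1 ≤ min M N) : (k:ℝ) + 1 ≤ DD M N k := by
  have hden := DD_den_pos hk
  have c1 : (k:ℝ) + 1 ≤ (M:ℝ) := by exact_mod_cast le_trans hk (min_le_left _ _)
  have c2 : (k:ℝ) + 1 ≤ (N:ℝ) := by exact_mod_cast le_trans hk (min_le_right _ _)
  rw [DD, le_div_iff₀ hden]
  nlinarith [mul_nonneg (sub_nonneg.2 c1) (sub_nonneg.2 c2)]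

lemma DD_pos {M N k : ℕ} (hk : k + 1 ≤ min M N) : 0 < DD M N k :=
  lt_of_lt_of_le (by positivity) (DD_ge hk)

lemma DD_gt {M N k : ℕ} (hk : k + 2 ≤ min M N) : (k:ℝ) + 1 < DD M N k := by
  have hden := DD_den_pos (by omega : k + 1 ≤ min M N)
  have c1 : (k:ℝ) + 2 ≤ (M:ℝ) := by exact_mod_cast le_trans hk (min_le_left _ _)
  have c2 : (k:ℝ) + 2 ≤ (N:ℝ) := by exact_mod_cast le_trans hk (min_le_right _ _)
  rw [DD, lt_div_iff₀ hden]
  nlinarith [mul_pos (show (0:ℝ) < (M:ℝ) - k - 1 by linarith)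
    (show (0:ℝ) < (N:ℝ) - k - 1 by linarith)]

lemma DD_lt_succ {M N k : ℕ} (hk : k + 2 ≤ min M N) : DD M N k < DD M N (k+1) := by
  have hden1 := DD_den_pos (by omega : k + 1 ≤ min M N)
  have hden2 := DD_den_pos (show (k+1) + 1 ≤ min M N from hk)
  have c1 : (k:ℝ) + 2 ≤ (M:ℝ) := by exact_mod_cast le_trans hk (min_le_left _ _)
  have c2 : (k:ℝ) + 2 ≤ (N:ℝ) := by exact_mod_cast le_trans hk (min_le_right _ _)
  rw [DD, DD, div_lt_div_iff₀ hden1 (by push_cast; push_cast at hden2; linarith)]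
  push_cast
  nlinarith [mul_pos (show (0:ℝ) < (M:ℝ) - k - 1 by linarith)
    (show (0:ℝ) < (N:ℝ) - k - 1 by linarith)]

lemma DD_lt_DD {M N j k : ℕ} (hjk : j < k) (hk : k + 1 ≤ min M N) :
    DD M N j < DD M N k := by
  induction k with
  | zero => omega
  | succ n ih =>
    have hn : n + 2 ≤ min M N := hk
    rcases Nat.lt_succ_iff_lt_or_eq.mp hjk with h | h
    · exact (ih h (by omega)).trans (DD_lt_succ hn)
    · subst h; exact DD_lt_succ hn

lemma DD_le_DD {M N j k : ℕ} (hjk : j ≤ k) (hk : k + 1 ≤ min M N) :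
    DD M N j ≤ DD M N k := by
  rcases lt_or_eq_of_le hjk with h | h
  · exact le_of_lt (DD_lt_DD h hk)
  · subst h; rfl

lemma DD_min {M N : ℕ} (hm : 1 ≤ min M N) : DD M N (min M N - 1) = ((min M N : ℕ) : ℝ) := by
  have hM : 1 ≤ M := le_trans hm (min_le_left _ _)
  have hN : 1 ≤ N := le_trans hm (min_le_right _ _)
  rcases le_total M N with h | h
  · rw [min_eq_left h]
    have hc : ((M - 1 : ℕ) : ℝ) = (M:ℝ) - 1 := by
      have := Nat.cast_sub (R := ℝ) hM; push_cast at this ⊢; linarith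
    have hab : (M:ℝ) ≤ (N:ℝ) := by exact_mod_cast h
    have h1 : (1:ℝ) ≤ (M:ℝ) := by exact_mod_cast hM
    have hden : (0:ℝ) < (N:ℝ) + (M:ℝ) - 1 - 2*((M-1:ℕ):ℝ) := by rw [hc]; linarith
    rw [DD, div_eq_iff (ne_of_gt hden), hc]
    ring
  · rw [min_eq_right h]
    have hc : ((N - 1 : ℕ) : ℝ) = (N:ℝ) - 1 := by
      have := Nat.cast_sub (R := ℝ) hN; push_cast at this ⊢; linarith
    have hab : (N:ℝ) ≤ (M:ℝ) := by exact_mod_cast h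
    have h1 : (1:ℝ) ≤ (N:ℝ) := by exact_mod_cast hN
    have hden : (0:ℝ) < (N:ℝ) + (M:ℝ) - 1 - 2*((N-1:ℕ):ℝ) := by rw [hc]; linarith
    rw [DD, div_eq_iff (ne_of_gt hden), hc]
    ring

lemma lIdx_DD {M N k : ℕ} (hk : k + 1 ≤ min M N) : lIdx M N (DD M N k) = k := by
  refine le_antisymm (lIdx_le le_rfl) ?_
  by_contra h
  push_neg at h
  have h2 := le_DD_lIdx (le_refl (DD M N k))
  have h3 := DD_lt_DD h hk
  linarith

lemma lIdx_facts {M N : ℕ} {D : ℝ} (hm : 1 ≤ min M N) (hD0 : 0 < D)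
    (hD : D ≤ ((min M N : ℕ) : ℝ)) :
    lIdx M N D + 1 ≤ min M N ∧ D ≤ DD M N (lIdx M N D) ∧ ((lIdx M N D : ℝ) < D) := by
  have hmem0 : D ≤ DD M N (min M N - 1) := by rw [DD_min hm]; exact hD
  have h1 : lIdx M N D ≤ min M N - 1 := lIdx_le hmem0
  have h1' : lIdx M N D + 1 ≤ min M N := by omega
  have h2 : D ≤ DD M N (lIdx M N D) := le_DD_lIdx hmem0
  refine ⟨h1', h2, ?_⟩
  rcases Nat.eq_zero_or_pos (lIdx M N D) with h | h
  · rw [h]; exact_mod_cast hD0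
  · obtain ⟨j, hj⟩ : ∃ j, lIdx M N D = j + 1 := ⟨lIdx M N D - 1, by omega⟩
    have hlt : DD M N j < D := DD_lt_of_lt (by omega)
    have hge : (j:ℝ) + 1 ≤ DD M N j := DD_ge (by omega)
    rw [hj]; push_cast; linarith

lemma dIC_DD {M N k : ℕ} (hk : k + 1 ≤ min M N) {r : ℝ} (hrD : r < DD M N k) :
    dIC M N (DD M N k) r = ((N:ℝ) + (M:ℝ) - 1 - 2*(k:ℝ)) * (DD M N k - r) := by
  have hpos := DD_pos hk
  have hden := DD_den_pos hk
  have c1 : (k:ℝ) + 1 ≤ (M:ℝ) := by exact_mod_cast le_trans hk (min_le_left _ _)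
  have c2 : (k:ℝ) + 1 ≤ (N:ℝ) := by exact_mod_cast le_trans hk (min_le_right _ _)
  rw [dIC, if_neg (by push_neg; exact ⟨hpos, hrD⟩), lIdx_DD hk]
  have hDk : DD M N k - (k:ℝ) = ((M:ℝ)-k)*((N:ℝ)-k) / ((N:ℝ)+(M:ℝ)-1-2*(k:ℝ)) := by
    rw [DD, eq_div_iff (ne_of_gt hden), sub_mul, div_mul_cancel₀ _ (ne_of_gt hden)]; ring
  have hnum : (0:ℝ) < ((M:ℝ)-k)*((N:ℝ)-k) :=
    mul_pos (by linarith) (by linarith)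
  rw [hDk, div_div_eq_mul_div, mul_comm (((M:ℝ)-k)*((N:ℝ)-k)), mul_div_assoc,
    div_self (ne_of_gt hnum), mul_one]

lemma DD_line {M N k : ℕ} (hk : k + 1 ≤ min M N) (x : ℝ) :
    ((N:ℝ) + (M:ℝ) - 1 - 2*(k:ℝ)) * (DD M N k - x)
      = (M:ℝ)*(N:ℝ) - (k:ℝ)*((k:ℝ)+1) - x*((N:ℝ)+(M:ℝ)-1-2*(k:ℝ)) := by
  have hden := DD_den_pos hk
  rw [DD]
  field_simp

lemma dFC_eq (M N : ℕ) (r : ℝ) :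
    dFC M N r = (M:ℝ)*(N:ℝ) - (⌊r⌋:ℝ)*((⌊r⌋:ℝ)+1) - r*((N:ℝ)+(M:ℝ)-1-2*(⌊r⌋:ℝ)) := by
  rw [dFC]; ring

lemma g_le_dFC (M N : ℕ) (k : ℕ) {r : ℝ} (hr : 0 ≤ r) :
    (M:ℝ)*(N:ℝ) - (k:ℝ)*((k:ℝ)+1) - r*((N:ℝ)+(M:ℝ)-1-2*(k:ℝ)) ≤ dFC M N r := by
  rw [dFC_eq]
  have hl0 : (0:ℤ) ≤ ⌊r⌋ := Int.floor_nonneg.2 hr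
  have hlr : ((⌊r⌋:ℤ):ℝ) ≤ r := Int.floor_le r
  have hrl : r < ((⌊r⌋:ℤ):ℝ) + 1 := Int.lt_floor_add_one r
  rcases lt_trichotomy (k:ℤ) ⌊r⌋ with h | h | h
  · have hkl : (k:ℝ) + 1 ≤ ((⌊r⌋:ℤ):ℝ) := by exact_mod_cast h
    nlinarith [mul_nonneg (show (0:ℝ) ≤ ((⌊r⌋:ℤ):ℝ) - (k:ℝ) by linarith)
      (show (0:ℝ) ≤ 2*r - (((⌊r⌋:ℤ):ℝ) + (k:ℝ) + 1) by linarith)]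
  · have : (k:ℝ) = ((⌊r⌋:ℤ):ℝ) := by exact_mod_cast h
    rw [this]
  · have hkl : ((⌊r⌋:ℤ):ℝ) + 1 ≤ (k:ℝ) := by exact_mod_cast h
    nlinarith [mul_nonneg (show (0:ℝ) ≤ (k:ℝ) - ((⌊r⌋:ℤ):ℝ) by linarith)
      (show (0:ℝ) ≤ ((⌊r⌋:ℤ):ℝ) + (k:ℝ) + 1 - 2*r by linarith)]

lemma dFC_nonneg {M N : ℕ} {r : ℝ} (hr0 : 0 ≤ r) (hrm : r ≤ ((min M N : ℕ):ℝ)) :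
    0 ≤ dFC M N r := by
  have hlr : ((⌊r⌋:ℤ):ℝ) ≤ r := Int.floor_le r
  have hrl : r < ((⌊r⌋:ℤ):ℝ) + 1 := Int.lt_floor_add_one r
  have cM : ((min M N : ℕ):ℝ) ≤ (M:ℝ) := by exact_mod_cast min_le_left M N
  have cN : ((min M N : ℕ):ℝ) ≤ (N:ℝ) := by exact_mod_cast min_le_right M N
  have hlm : ⌊r⌋ ≤ ((min M N : ℕ) : ℤ) := by
    have h1 : ⌊r⌋ ≤ ⌊((min M N : ℕ):ℝ)⌋ := Int.floor_le_floor hrm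
    rwa [Int.floor_natCast] at h1
  have hminM : ((min M N : ℕ):ℤ) ≤ (M:ℤ) := by exact_mod_cast min_le_left M N
  have hminN : ((min M N : ℕ):ℤ) ≤ (N:ℤ) := by exact_mod_cast min_le_right M N
  rcases eq_or_lt_of_le hlm with h | h
  · have hmr : ((min M N : ℕ):ℝ) ≤ r := by
      calc ((min M N : ℕ):ℝ) = ((⌊r⌋:ℤ):ℝ) := by exact_mod_cast congrArg (Int.cast (R := ℝ)) h.symm
        _ ≤ r := hlr
    have hreq : r = ((min M N : ℕ):ℝ) := le_antisymm hrm hmr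
    have hfl : ((⌊r⌋:ℤ):ℝ) = r := by
      rw [hreq, Int.floor_natCast]; push_cast; ring
    rw [dFC, hfl]
    nlinarith [mul_nonneg (show (0:ℝ) ≤ (M:ℝ) - r by rw [hreq]; linarith)
      (show (0:ℝ) ≤ (N:ℝ) - r by rw [hreq]; linarith)]
  · have h1 : ((⌊r⌋:ℤ):ℝ) + 1 ≤ (M:ℝ) := by exact_mod_cast (by omega : ⌊r⌋ + 1 ≤ (M:ℤ))
    have h2 : ((⌊r⌋:ℤ):ℝ) + 1 ≤ (N:ℝ) := by exact_mod_cast (by omega : ⌊r⌋ + 1 ≤ (N:ℤ))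
    rw [dFC]
    nlinarith [mul_nonneg (mul_nonneg (show (0:ℝ) ≤ 1 - (r - ((⌊r⌋:ℤ):ℝ)) by linarith)
        (show (0:ℝ) ≤ (M:ℝ) - ((⌊r⌋:ℤ):ℝ) by linarith)) (show (0:ℝ) ≤ (N:ℝ) - ((⌊r⌋:ℤ):ℝ) by linarith),
      mul_nonneg (mul_nonneg (show (0:ℝ) ≤ r - ((⌊r⌋:ℤ):ℝ) by linarith)
        (show (0:ℝ) ≤ (M:ℝ) - ((⌊r⌋:ℤ):ℝ) - 1 by linarith)) (show (0:ℝ) ≤ (N:ℝ) - ((⌊r⌋:ℤ):ℝ) - 1 by linarith)]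

lemma dIC_le_dFC (M N : ℕ) {D r : ℝ} (hm : 1 ≤ min M N) (hr0 : 0 ≤ r)
    (hrm : r ≤ ((min M N : ℕ):ℝ)) (hD : D ≤ ((min M N : ℕ):ℝ)) :
    dIC M N D r ≤ dFC M N r := by
  rw [dIC]
  split_ifs with h
  · exact dFC_nonneg hr0 hrm
  · push_neg at h
    obtain ⟨hD0, hrD⟩ := h
    obtain ⟨hl1, hmem, hlD⟩ := lIdx_facts hm hD0 hD
    set l := lIdx M N D with hldef
    have hden : (0:ℝ) < (N:ℝ)+(M:ℝ)-1-2*(l:ℝ) := DD_den_pos hl1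
    have hmem' : D * ((N:ℝ)+(M:ℝ)-1-2*(l:ℝ)) ≤ (M:ℝ)*(N:ℝ) - (l:ℝ)*((l:ℝ)+1) := by
      rw [DD, le_div_iff₀ hden] at hmem
      exact hmem
    have hDl : (0:ℝ) < D - (l:ℝ) := by linarith
    have hkey : ((N:ℝ)+(M:ℝ)-1-2*(l:ℝ)) * (D - (l:ℝ)) ≤ ((M:ℝ)-l)*((N:ℝ)-l) := by
      nlinarith [hmem']
    rcases le_or_gt (l:ℝ) r with hlr | hlr
    · refine le_trans ?_ (g_le_dFC M N l hr0)
      rw [div_mul_eq_mul_div, div_le_iff₀ hDl]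
      nlinarith [mul_nonneg (sub_nonneg.2 hlr) (sub_nonneg.2 hkey)]
    · have hl1' : 1 ≤ l := by
        rcases Nat.eq_zero_or_pos l with h0 | h0
        · exfalso; rw [h0] at hlr; simp at hlr; linarith
        · exact h0
      have hcast : ((l - 1 : ℕ):ℝ) = (l:ℝ) - 1 := by
        have := Nat.cast_sub (R := ℝ) hl1'; push_cast at this ⊢; linarith
      have hstr : DD M N (l-1) < D := DD_lt_of_lt (by omega)
      have hden' : (0:ℝ) < (N:ℝ)+(M:ℝ)-1-2*((l-1:ℕ):ℝ) := by rw [hcast]; linarith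
      have hstr' : (M:ℝ)*(N:ℝ) - ((l-1:ℕ):ℝ)*(((l-1:ℕ):ℝ)+1)
          < D * ((N:ℝ)+(M:ℝ)-1-2*((l-1:ℕ):ℝ)) := by
        rw [DD, div_lt_iff₀ hden'] at hstr
        exact hstr
      have hkey2 : ((M:ℝ)-l)*((N:ℝ)-l) < ((N:ℝ)+(M:ℝ)+1-2*(l:ℝ)) * (D - (l:ℝ)) := by
        rw [hcast] at hstr'
        nlinarith [hstr']
      refine le_trans ?_ (g_le_dFC M N (l-1) hr0)
      rw [div_mul_eq_mul_div, div_le_iff₀ hDl, hcast]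
      nlinarith [mul_nonneg (show (0:ℝ) ≤ (l:ℝ) - r by linarith)
        (le_of_lt (sub_pos.2 hkey2))]

lemma choose_k (M N : ℕ) {c : ℕ} (hc : 1 ≤ c) {r : ℝ} (hr0 : 0 ≤ r) (hrc : r ≤ (c:ℝ)) :
    ∃ k : ℕ, (k:ℝ) ≤ r ∧ r ≤ (k:ℝ) + 1 ∧ k + 1 ≤ c ∧
      dFC M N r = (M:ℝ)*(N:ℝ) - (k:ℝ)*((k:ℝ)+1) - r*((N:ℝ)+(M:ℝ)-1-2*(k:ℝ)) := by
  have hfl0 : (0:ℤ) ≤ ⌊r⌋ := Int.floor_nonneg.2 hr0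
  set l : ℕ := ⌊r⌋.toNat with hldef
  have hcastl : ((l:ℕ):ℝ) = ((⌊r⌋:ℤ):ℝ) := by
    rw [hldef]; exact_mod_cast Int.toNat_of_nonneg hfl0
  have hlr : (l:ℝ) ≤ r := by rw [hcastl]; exact Int.floor_le r
  have hrl : r < (l:ℝ) + 1 := by rw [hcastl]; exact Int.lt_floor_add_one r
  by_cases hl : l + 1 ≤ c
  · exact ⟨l, hlr, le_of_lt hrl, hl, by rw [dFC_eq, ← hcastl]⟩
  · have hlc : (c:ℝ) ≤ (l:ℝ) := by exact_mod_cast (by omega : c ≤ l)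
    have hrc' : r = (c:ℝ) := le_antisymm hrc (by linarith)
    have hfl : (((⌊r⌋:ℤ)):ℝ) = (c:ℝ) := by
      rw [hrc', Int.floor_natCast]; push_cast; ring
    have hcast : ((c-1:ℕ):ℝ) = (c:ℝ) - 1 := by
      have := Nat.cast_sub (R := ℝ) hc; push_cast at this ⊢; linarith
    refine ⟨c - 1, by rw [hcast]; linarith, by rw [hcast]; linarith, by omega, ?_⟩
    rw [dFC_eq, hfl, hrc', hcast]
    ring

lemma DDs (s : ℕ) (hs : 1 ≤ s) : DD (s+1) (3*s) s = (s:ℝ) + 1 := by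
  have hS : (1:ℝ) ≤ (s:ℝ) := by exact_mod_cast hs
  rw [DD]
  push_cast
  rw [div_eq_iff (by linarith : (3*(s:ℝ)) + ((s:ℝ)+1) - 1 - 2*(s:ℝ) ≠ 0)]
  ring

lemma DDsm1 (s : ℕ) (hs : 1 ≤ s) :
    DD (2*(s+1)) (3*s) (2*s) = 2 * DD (s+1) (3*s) (s-1) := by
  have hS : (1:ℝ) ≤ (s:ℝ) := by exact_mod_cast hs
  have hc : ((s-1:ℕ):ℝ) = (s:ℝ) - 1 := by
    have := Nat.cast_sub (R := ℝ) hs; push_cast at this ⊢; linarith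
  rw [DD, DD, hc]
  push_cast
  rw [mul_div_assoc']
  rw [div_eq_div_iff (by linarith) (by linarith)]
  ring

lemma DD2s1 (s : ℕ) (hs : 2 ≤ s) : DD (2*(s+1)) (3*s) (2*s+1) = 2*(s:ℝ) + 2 := by
  have hS : (2:ℝ) ≤ (s:ℝ) := by exact_mod_cast hs
  rw [DD]
  push_cast
  rw [div_eq_iff (by linarith : (3*(s:ℝ)) + (2*((s:ℝ)+1)) - 1 - 2*(2*(s:ℝ)+1) ≠ 0)]
  ring

lemma sum_idx_bound {s k : ℕ} (hs : 1 ≤ s) (hk : k + 1 ≤ s) :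
    2 * lIdx (2*(s+1)) (3*s) (2 * DD (s+1) (3*s) k) ≤ 3*s + 1 + k := by
  have hS : (1:ℝ) ≤ (s:ℝ) := by exact_mod_cast hs
  have hK : (k:ℝ) + 1 ≤ (s:ℝ) := by exact_mod_cast hk
  have hK0 : (0:ℝ) ≤ (k:ℝ) := Nat.cast_nonneg k
  have hd1 : (0:ℝ) < (3*(s:ℝ)) + ((s:ℝ)+1) - 1 - 2*(k:ℝ) := by linarith
  rcases Nat.even_or_odd (3*s + k) with ⟨t, ht⟩ | ⟨t, ht⟩
  · -- even : 3s + k = 2t, use index t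
    have hT : ((t:ℕ):ℝ) = (3*(s:ℝ) + (k:ℝ))/2 := by
      have : ((3*s + k : ℕ):ℝ) = ((t + t : ℕ):ℝ) := by
        exact_mod_cast congrArg (Nat.cast : ℕ → ℝ) ht
      push_cast at this; linarith
    have hu2 : (2:ℝ) ≤ (s:ℝ) - (k:ℝ) := by
      have h2 : ((k:ℕ):ℝ) + 2 ≤ ((s:ℕ):ℝ) := by exact_mod_cast (by omega : k + 2 ≤ s)
      linarith
    have hle : 2 * DD (s+1) (3*s) k ≤ DD (2*(s+1)) (3*s) t := by
      rw [DD, DD]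
      push_cast
      rw [mul_div_assoc']
      rw [div_le_div_iff₀ hd1 (by rw [hT]; linarith)]
      rw [hT]
      nlinarith [mul_nonneg (mul_nonneg hK0 (by linarith : (0:ℝ) ≤ 3*((s:ℝ)-(k:ℝ))+4))
          (by linarith : (0:ℝ) ≤ (s:ℝ)-(k:ℝ)-2),
        mul_nonneg (by linarith : (0:ℝ) ≤ (s:ℝ)-(k:ℝ))
          (by nlinarith : (0:ℝ) ≤ 3*((s:ℝ)-(k:ℝ))^2 - 12),
        pow_nonneg (by linarith : (0:ℝ) ≤ (s:ℝ)-(k:ℝ)) 3]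
    have := lIdx_le hle
    omega
  · -- odd : 3s + k = 2t + 1, use index t + 1
    have hT : ((t:ℕ):ℝ) = (3*(s:ℝ) + (k:ℝ) - 1)/2 := by
      have : ((3*s + k : ℕ):ℝ) = ((2*t + 1 : ℕ):ℝ) := by
        exact_mod_cast congrArg (Nat.cast : ℕ → ℝ) ht
      push_cast at this; linarith
    have hu1 : (1:ℝ) ≤ (s:ℝ) - (k:ℝ) := by linarith
    have hle : 2 * DD (s+1) (3*s) k ≤ DD (2*(s+1)) (3*s) (t+1) := by
      rw [DD, DD]
      push_cast
      rw [mul_div_assoc']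
      rw [div_le_div_iff₀ hd1 (by rw [hT]; linarith)]
      rw [hT]
      nlinarith [mul_nonneg (mul_nonneg (by linarith : (0:ℝ) ≤ 2*(s:ℝ)-(k:ℝ))
          (by linarith : (0:ℝ) ≤ (s:ℝ)-(k:ℝ)-1)) (by linarith : (0:ℝ) ≤ (s:ℝ)-(k:ℝ)+1)]
    have := lIdx_le hle
    omega

set_option maxHeartbeats 2000000 in
theorem stmt12 (s : ℕ) (hs : 1 ≤ s) (r : ℝ) (hr0 : 0 ≤ r)
    (hrL : r ≤ ((min (3 * s) (2 * (s + 1)) : ℕ) : ℝ) / 2) :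
    sSup {x : ℝ | ∃ D₁ D₂ : ℝ,
        0 ≤ D₁ ∧ D₁ ≤ (s : ℝ) + 1 ∧ 0 ≤ D₂ ∧ D₂ ≤ (s : ℝ) + 1 ∧
        D₁ + D₂ ≤ ((min (3 * s) (2 * (s + 1)) : ℕ) : ℝ) ∧
        x = min (min (dIC (s + 1) (3 * s) D₁ r) (dIC (s + 1) (3 * s) D₂ r))
              (dIC (2 * (s + 1)) (3 * s) (D₁ + D₂) (2 * r))}
      = dFCmac 2 (s + 1) (3 * s) r := by
  have hS : (1:ℝ) ≤ (s:ℝ) := by exact_mod_cast hs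
  have hminMN : min (s+1) (3*s) = s + 1 := min_eq_left (by omega)
  have hminM'N : min (2*(s+1)) (3*s) = min (3*s) (2*(s+1)) := Nat.min_comm _ _
  have hLcast : ((min (3*s) (2*(s+1)) : ℕ):ℝ) = min (3*(s:ℝ)) (2*((s:ℝ)+1)) := by
    rw [Nat.cast_min]; push_cast; ring_nf
  have hLle : ((min (3*s) (2*(s+1)) : ℕ):ℝ) ≤ 2*((s:ℝ)+1) := by
    rw [hLcast]; exact min_le_right _ _
  -- split dFCmac
  have hdivc : ((3*s : ℕ):ℝ) / (((2:ℕ):ℝ) + 1) = (s:ℝ) := by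
    push_cast
    rw [div_eq_iff (by norm_num : (2:ℝ)+1 ≠ 0)]
    ring
  have hsplit : dFCmac 2 (s+1) (3*s) r
      = if r ≤ (s:ℝ) then dFC (s+1) (3*s) r else dFC (2*(s+1)) (3*s) (2*r) := by
    rw [dFCmac, hdivc]
    have hm : min (s:ℝ) (((s+1:ℕ)):ℝ) = (s:ℝ) := by
      rw [min_eq_left]; push_cast; linarith
    rw [hm, show ((2:ℕ):ℝ) * r = 2 * r by push_cast; ring]
  -- upper bound
  have hub : ∀ x ∈ {x : ℝ | ∃ D₁ D₂ : ℝ,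
        0 ≤ D₁ ∧ D₁ ≤ (s : ℝ) + 1 ∧ 0 ≤ D₂ ∧ D₂ ≤ (s : ℝ) + 1 ∧
        D₁ + D₂ ≤ ((min (3 * s) (2 * (s + 1)) : ℕ) : ℝ) ∧
        x = min (min (dIC (s + 1) (3 * s) D₁ r) (dIC (s + 1) (3 * s) D₂ r))
              (dIC (2 * (s + 1)) (3 * s) (D₁ + D₂) (2 * r))},
      x ≤ dFCmac 2 (s+1) (3*s) r := by
    rintro x ⟨D₁, D₂, hD10, hD1s, hD20, hD2s, hsum, rfl⟩
    by_cases hc : r ≤ (s:ℝ)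
    · rw [hsplit, if_pos hc]
      refine le_trans (le_trans (min_le_left _ _) (min_le_left _ _)) ?_
      refine dIC_le_dFC (s+1) (3*s) (by omega) hr0 ?_ ?_
      · rw [hminMN]; push_cast; linarith
      · rw [hminMN]; push_cast; linarith
    · rw [hsplit, if_neg hc]
      refine le_trans (min_le_right _ _) ?_
      refine dIC_le_dFC (2*(s+1)) (3*s) (by omega) (by linarith) ?_ ?_
      · rw [hminM'N]; linarith
      · rw [hminM'N]; exact hsum
  -- witness
  have hwit : dFCmac 2 (s+1) (3*s) r ∈ {x : ℝ | ∃ D₁ D₂ : ℝ,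
        0 ≤ D₁ ∧ D₁ ≤ (s : ℝ) + 1 ∧ 0 ≤ D₂ ∧ D₂ ≤ (s : ℝ) + 1 ∧
        D₁ + D₂ ≤ ((min (3 * s) (2 * (s + 1)) : ℕ) : ℝ) ∧
        x = min (min (dIC (s + 1) (3 * s) D₁ r) (dIC (s + 1) (3 * s) D₂ r))
              (dIC (2 * (s + 1)) (3 * s) (D₁ + D₂) (2 * r))} := by
    by_cases hc : r ≤ (s:ℝ)
    · -- Case A
      have hVA : dFCmac 2 (s+1) (3*s) r = dFC (s+1) (3*s) r := by rw [hsplit, if_pos hc]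
      obtain ⟨k, hk1, hk2, hk3, hk4⟩ := choose_k (s+1) (3*s) hs hr0 hc
      have hkm : k + 1 ≤ min (s+1) (3*s) := by omega
      have hkm2 : k + 2 ≤ min (s+1) (3*s) := by omega
      have hK : (k:ℝ) + 1 ≤ (s:ℝ) := by exact_mod_cast hk3
      have hK0 : (0:ℝ) ≤ (k:ℝ) := Nat.cast_nonneg k
      set D := DD (s+1) (3*s) k with hDdef
      have hrD : r < D := lt_of_le_of_lt hk2 (DD_gt hkm2)
      have hDpos : (0:ℝ) < D := DD_pos hkm
      have hDlt : D < DD (s+1) (3*s) s := DD_lt_DD (by omega) (by omega)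
      have hDs1 : D ≤ (s:ℝ) + 1 := by rw [DDs s hs] at hDlt; linarith
      have h2D3s : D + D ≤ 3*(s:ℝ) := by
        rw [hDdef, DD]
        push_cast
        rw [← add_div, div_le_iff₀ (by linarith : (0:ℝ) < 3*(s:ℝ)+((s:ℝ)+1)-1-2*(k:ℝ))]
        nlinarith [mul_nonneg (by linarith : (0:ℝ) ≤ (s:ℝ)) (by linarith : (0:ℝ) ≤ (s:ℝ)-(k:ℝ)-1)]
      have ht1 : dIC (s+1) (3*s) D r = dFC (s+1) (3*s) r := by
        rw [hDdef, dIC_DD hkm hrD, DD_line hkm, hk4]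
      -- third term
      have h2D0 : (0:ℝ) < 2*D := by linarith
      have h2DL : 2*D ≤ ((min (2*(s+1)) (3*s) : ℕ):ℝ) := by
        rw [hminM'N, hLcast]
        exact le_min (by linarith) (by linarith)
      obtain ⟨hj1, hjmem, hjD⟩ := lIdx_facts (M := 2*(s+1)) (N := 3*s) (by omega) h2D0 h2DL
      set j := lIdx (2*(s+1)) (3*s) (2*D) with hjdef
      have hjb : 2*j ≤ 3*s + 1 + k := sum_idx_bound hs hk3
      have hJ : 2*(j:ℝ) ≤ 3*(s:ℝ) + 1 + (k:ℝ) := by exact_mod_cast hjb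
      have hdenj : (0:ℝ) < ((3*s:ℕ):ℝ) + ((2*(s+1):ℕ):ℝ) - 1 - 2*(j:ℝ) := DD_den_pos hj1
      have hmemj : 2*D * (((3*s:ℕ):ℝ) + ((2*(s+1):ℕ):ℝ) - 1 - 2*(j:ℝ))
          ≤ ((2*(s+1):ℕ):ℝ)*((3*s:ℕ):ℝ) - (j:ℝ)*((j:ℝ)+1) := by
        rw [DD, le_div_iff₀ hdenj] at hjmem; exact hjmem
      have hjD' : (0:ℝ) < 2*D - (j:ℝ) := by linarith
      have hcoefj : (((3*s:ℕ):ℝ) + ((2*(s+1):ℕ):ℝ) - 1 - 2*(j:ℝ)) * (2*D - (j:ℝ))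
          ≤ (((2*(s+1):ℕ):ℝ) - (j:ℝ)) * (((3*s:ℕ):ℝ) - (j:ℝ)) := by
        nlinarith [hmemj]
      have ht3 : dFC (s+1) (3*s) r ≤ dIC (2*(s+1)) (3*s) (2*D) (2*r) := by
        rw [dIC, if_neg (by push_neg; exact ⟨h2D0, by linarith⟩), ← hjdef]
        have e1 : dFC (s+1) (3*s) r = (((3*s:ℕ):ℝ)+((s+1:ℕ):ℝ)-1-2*(k:ℝ))*(D - r) := by
          rw [hk4, hDdef, DD_line hkm]
        rw [e1]
        have hc1 : (((3*s:ℕ):ℝ)+((s+1:ℕ):ℝ)-1-2*(k:ℝ))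
            ≤ 2*(((3*s:ℕ):ℝ) + ((2*(s+1):ℕ):ℝ) - 1 - 2*(j:ℝ)) := by push_cast; linarith
        have hc2 : (((3*s:ℕ):ℝ) + ((2*(s+1):ℕ):ℝ) - 1 - 2*(j:ℝ))
            ≤ (((2*(s+1):ℕ):ℝ) - (j:ℝ)) * (((3*s:ℕ):ℝ) - (j:ℝ)) / (2*D - (j:ℝ)) := by
          rw [le_div_iff₀ hjD']; exact hcoefj
        have hDr : (0:ℝ) ≤ D - r := by linarith
        nlinarith [mul_le_mul_of_nonneg_right hc1 hDr,
          mul_le_mul_of_nonneg_right hc2 (by linarith : (0:ℝ) ≤ 2*D - 2*r)]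
      refine ⟨D, D, by linarith, hDs1, by linarith, hDs1, ?_, ?_⟩
      · rw [hLcast]; exact le_min (by linarith) (by linarith)
      · rw [hVA, min_self, ht1, show D + D = 2*D by ring]
        exact (min_eq_left ht3).symm
    · -- Case B
      have hrs : (s:ℝ) < r := not_le.mp hc
      have hVB : dFCmac 2 (s+1) (3*s) r = dFC (2*(s+1)) (3*s) (2*r) := by
        rw [hsplit, if_neg hc]
      have h2rL : 2*r ≤ ((min (3*s) (2*(s+1)):ℕ):ℝ) := by linarith
      obtain ⟨k, hk1, hk2, hk3, hk4⟩ :=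
        choose_k (2*(s+1)) (3*s) (show 1 ≤ min (3*s) (2*(s+1)) by omega) (by linarith) h2rL
      have hk2s : 2*s ≤ k := by
        have h1 : ((2*s:ℕ):ℝ) < ((k+1:ℕ):ℝ) := by push_cast; linarith
        have := (Nat.cast_lt (α := ℝ)).mp h1
        omega
      have hk2s1 : k ≤ 2*s + 1 := by omega
      rcases (by omega : k = 2*s ∨ k = 2*s + 1) with hk | hk
      · -- k = 2s
        subst hk
        set D2 := DD (2*(s+1)) (3*s) (2*s) with hD2def
        have hkmB : 2*s + 1 ≤ min (2*(s+1)) (3*s) := by omega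
        have hgeB : ((2*s:ℕ):ℝ) + 1 ≤ D2 := DD_ge hkmB
        have h2rD2 : 2*r ≤ D2 := by
          push_cast at hgeB hk2
          linarith
        have hid : D2 = 2 * DD (s+1) (3*s) (s-1) := DDsm1 s hs
        set D := DD (s+1) (3*s) (s-1) with hDdef
        have hkA : (s-1) + 1 ≤ min (s+1) (3*s) := by omega
        have hrD : r ≤ D := by linarith [hid, h2rD2]
        have hcs1 : ((s-1:ℕ):ℝ) = (s:ℝ) - 1 := by
          have := Nat.cast_sub (R := ℝ) hs; push_cast at this ⊢; linarith
        have hD2L : D2 ≤ ((min (3*s) (2*(s+1)):ℕ):ℝ) := by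
          have h1 : D2 ≤ DD (2*(s+1)) (3*s) (min (2*(s+1)) (3*s) - 1) :=
            DD_le_DD (by omega) (by omega)
          rw [DD_min (by omega), hminM'N] at h1
          exact h1
        have hDpos : (0:ℝ) < D := DD_pos hkA
        have hDs1 : D ≤ (s:ℝ) + 1 := by
          have := hD2L
          rw [hid] at this
          linarith [hLle]
        have ht3 : dIC (2*(s+1)) (3*s) (D + D) (2*r) = dFC (2*(s+1)) (3*s) (2*r) := by
          have hDD : D + D = D2 := by rw [hid]; ring
          rw [hDD]
          rcases lt_or_eq_of_le h2rD2 with hlt | heq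
          · rw [hD2def, dIC_DD hkmB hlt, DD_line hkmB, hk4]
          · rw [dIC, if_pos (Or.inr (le_of_eq heq.symm)), hk4]
            have hline := DD_line hkmB (2*r)
            rw [← hD2def, ← heq] at hline
            rw [← hline]
            ring
        have ht1 : dIC (s+1) (3*s) D r = dFC (2*(s+1)) (3*s) (2*r) := by
          rcases lt_or_eq_of_le hrD with hlt | heq
          · rw [hDdef, dIC_DD hkA hlt, DD_line hkA, hk4, hcs1]
            push_cast
            ring
          · rw [dIC, if_pos (Or.inr (le_of_eq heq.symm)), hk4]
            have hline := DD_line hkmB (2*r)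
            have h2rD2' : 2*r = D2 := by rw [hid]; linarith
            rw [← hD2def, ← h2rD2'] at hline
            rw [← hline]
            ring
        refine ⟨D, D, by linarith, hDs1, by linarith, hDs1, ?_, ?_⟩
        · rw [show D + D = D2 by rw [hid]; ring]; exact hD2L
        · rw [hVB, min_self, ht1, ht3, min_self]
      · -- k = 2s+1
        subst hk
        have hs2 : 2 ≤ s := by omega
        have hS2 : (2:ℝ) ≤ (s:ℝ) := by exact_mod_cast hs2
        set D2 := DD (2*(s+1)) (3*s) (2*s+1) with hD2def
        have hD2val : D2 = 2*(s:ℝ) + 2 := DD2s1 s hs2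
        have hkmB : (2*s+1) + 1 ≤ min (2*(s+1)) (3*s) := by omega
        have h2rD2 : 2*r ≤ D2 := by
          push_cast at hk2
          rw [hD2val]
          linarith
        set D := DD (s+1) (3*s) s with hDdef
        have hDval : D = (s:ℝ) + 1 := DDs s hs
        have hkA : s + 1 ≤ min (s+1) (3*s) := by omega
        have hrD : r ≤ D := by rw [hDval]; rw [hD2val] at h2rD2; linarith
        have ht3 : dIC (2*(s+1)) (3*s) (D + D) (2*r) = dFC (2*(s+1)) (3*s) (2*r) := by
          have hDD : D + D = D2 := by rw [hDval, hD2val]; ring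
          rw [hDD]
          rcases lt_or_eq_of_le h2rD2 with hlt | heq
          · rw [hD2def, dIC_DD hkmB hlt, DD_line hkmB, hk4]
          · rw [dIC, if_pos (Or.inr (le_of_eq heq.symm)), hk4]
            have hline := DD_line hkmB (2*r)
            rw [← hD2def, ← heq] at hline
            rw [← hline]
            ring
        have ht1 : dFC (2*(s+1)) (3*s) (2*r) ≤ dIC (s+1) (3*s) D r := by
          rcases lt_or_eq_of_le hrD with hlt | heq
          · rw [hDdef, dIC_DD hkA hlt, DD_line hkA, hk4]
            push_cast
            nlinarith [hrD, hDval]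
          · rw [dIC, if_pos (Or.inr (le_of_eq heq.symm)), hk4]
            rw [hDval] at heq
            push_cast
            nlinarith [heq]
        refine ⟨D, D, by rw [hDval]; linarith, by rw [hDval], by rw [hDval]; linarith,
          by rw [hDval], ?_, ?_⟩
        · rw [hDval, hLcast]
          refine le_min (by linarith) (by linarith)
        · rw [hVB, min_self, ht3]
          exact (min_eq_right ht1).symm
  exact le_antisymm (csSup_le ⟨_, hwit⟩ hub) (le_csSup ⟨_, hub⟩ hwit)
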